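/- In the guarded lambda calculus's denotational model, the fixed-point combinator satisfies: for every object A of the topos of trees and every morphism f : ▶A → A, there exists a unique global element a : 1 → A such that f ∘ next ∘ a = a. -/

import Mathlib

open CategoryTheory

structure TObj : Type 1 where
  X : ℕ → Type
  res : ∀ n, X (n+1) → X n

@[ext]
structure THom (A B : TObj) : Type where
  app : ∀ n, A.X n → B.X n
  nat : ∀ n (x : A.X (n+1)), app n (A.res n x) = B.res n (app (n+1) x)

instance : Category TObj where
  Hom := THom
  id A := ⟨fun _ x => x, fun _ _ => rfl⟩
  comp f g := ⟨fun n x => g.app n (f.app n x), fun n x => by rw [f.nat, g.nat]⟩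
  id_comp f := rfl
  comp_id f := rfl
  assoc f g h := rfl

def Delta (Z : Type) : TObj := ⟨fun _ => Z, fun _ z => z⟩

def LaterX (A : TObj) : ℕ → Type
  | 0 => PUnit
  | n+1 => A.X n

def LaterRes (A : TObj) : ∀ n, LaterX A (n+1) → LaterX A n
  | 0 => fun _ => PUnit.unit
  | n+1 => A.res n

def LaterObj (A : TObj) : TObj := ⟨LaterX A, LaterRes A⟩

def LaterMap {A B : TObj} (f : A ⟶ B) : LaterObj A ⟶ LaterObj B where
  app := fun n => match n with
    | 0 => fun _ => PUnit.unit
    | n+1 => f.app n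
  nat := fun n => match n with
    | 0 => fun _ => rfl
    | n+1 => fun x => f.nat n x

def nextT (A : TObj) : A ⟶ LaterObj A where
  app := fun n => match n with
    | 0 => fun _ => PUnit.unit
    | n+1 => A.res n
  nat := fun n => match n with
    | 0 => fun _ => rfl
    | n+1 => fun _ => rfl

def toUnitT (A : TObj) : A ⟶ Delta PUnit := ⟨fun _ _ => PUnit.unit, fun _ _ => rfl⟩

def OmegaObj : TObj where
  X := fun n => Fin (n+2)
  res := fun n k => ⟨min (n+1) k.val, by omega⟩

def trueT : Delta PUnit ⟶ OmegaObj where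
  app := fun n _ => ⟨n+1, by omega⟩
  nat := fun n _ => by
    apply Fin.ext
    show n+1 = min (n+1) (n+2)
    omega

def topT (X : TObj) : X ⟶ OmegaObj where
  app := fun n _ => ⟨n+1, by omega⟩
  nat := fun n _ => by
    apply Fin.ext
    show n+1 = min (n+1) (n+2)
    omega

def laterOmega : OmegaObj ⟶ OmegaObj where
  app := fun n k => ⟨min (n+1) (k.val+1), by omega⟩
  nat := fun n k => by
    apply Fin.ext
    show min (n+1) (min (n+1) k.val + 1) = min (n+1) (min (n+2) (k.val+1))
    omega

def nnOmega : OmegaObj ⟶ OmegaObj where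
  app := fun n k => ⟨if k.val = 0 then 0 else n+1, by split <;> omega⟩
  nat := fun n k => by
    apply Fin.ext
    show (if min (n+1) k.val = 0 then 0 else n+1) = min (n+1) (if k.val = 0 then 0 else n+2)
    rcases Nat.eq_zero_or_pos k.val with h | h
    · simp [h]
    · rw [if_neg (by omega), if_neg (by omega)]; omega

def ProdObj (A B : TObj) : TObj :=
  ⟨fun n => A.X n × B.X n, fun n p => (A.res n p.1, B.res n p.2)⟩

def proj1 (A B : TObj) : ProdObj A B ⟶ A := ⟨fun _ p => p.1, fun _ _ => rfl⟩
def proj2 (A B : TObj) : ProdObj A B ⟶ B := ⟨fun _ p => p.2, fun _ _ => rfl⟩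

def pairT {C A B : TObj} (f : C ⟶ A) (g : C ⟶ B) : C ⟶ ProdObj A B where
  app := fun n x => (f.app n x, g.app n x)
  nat := fun n x => by
    show _ = (A.res n (f.app (n+1) x), B.res n (g.app (n+1) x))
    rw [f.nat, g.nat]

def canProd (A B : TObj) : LaterObj (ProdObj A B) ⟶ ProdObj (LaterObj A) (LaterObj B) :=
  pairT (LaterMap (proj1 A B)) (LaterMap (proj2 A B))

def ExpObj (X Y : TObj) : TObj where
  X := fun n => {f : ∀ k, k ≤ n → X.X k → Y.X k //
    ∀ k (h : k+1 ≤ n) (x : X.X (k+1)),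
      f k (Nat.le_of_succ_le h) (X.res k x) = Y.res k (f (k+1) h x)}
  res := fun n f =>
    ⟨fun k h => f.1 k (h.trans (Nat.le_succ n)),
     fun k h x => f.2 k (h.trans (Nat.le_succ n)) x⟩

def limE {X Y : TObj} (g : Delta PUnit ⟶ ExpObj X Y) :
    (Delta PUnit ⟶ X) → (Delta PUnit ⟶ Y) := fun x =>
  { app := fun n u => (g.app n u).1 n (le_refl n) (x.app n u)
    nat := fun n u => by
      have hg : g.app n u = (ExpObj X Y).res n (g.app (n+1) u) := g.nat n u
      have hx : x.app n u = X.res n (x.app (n+1) u) := x.nat n u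
      show (g.app n u).1 n (le_refl n) (x.app n u) =
        Y.res n ((g.app (n+1) u).1 (n+1) (le_refl (n+1)) (x.app (n+1) u))
      rw [hg, hx]
      exact (g.app (n+1) u).2 n (le_refl (n+1)) (x.app (n+1) u) }

def fixSeq (A : TObj) (f : LaterObj A ⟶ A) : ∀ n, A.X n
  | 0 => f.app 0 PUnit.unit
  | n+1 => f.app (n+1) (fixSeq A f n)

lemma fixSeq_res (A : TObj) (f : LaterObj A ⟶ A) :
    ∀ n, A.res n (fixSeq A f (n+1)) = fixSeq A f n := by
  intro n
  induction n with
  | zero => exact (f.nat 0 (fixSeq A f 0)).symm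
  | succ m ih =>
    have h := (f.nat (m+1) (fixSeq A f (m+1))).symm
    show A.res (m+1) (f.app (m+2) (fixSeq A f (m+1))) = fixSeq A f (m+1)
    show A.res (m+1) (f.app (m+1+1) (fixSeq A f (m+1))) = fixSeq A f (m+1)
    rw [h]
    show f.app (m+1) (A.res m (fixSeq A f (m+1))) = _
    rw [ih]
    rfl

/-- Every morphism `f : ▶A → A` in the topos of trees has a unique fixed point
among global elements: there is a unique `a : 1 ⟶ A` with `f ∘ next ∘ a = a`. -/
theorem unique_guarded_fixed_point (A : TObj) (f : LaterObj A ⟶ A) :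
    ∃! a : Delta PUnit ⟶ A, (a ≫ nextT A) ≫ f = a := by
  refine ⟨⟨fun n _ => fixSeq A f n, fun n _ => (fixSeq_res A f n).symm⟩, ?_, ?_⟩
  · apply THom.ext
    funext n u
    cases n with
    | zero => rfl
    | succ m =>
      show f.app (m+1) (A.res m (fixSeq A f (m+1))) = fixSeq A f (m+1)
      rw [fixSeq_res]
      rfl
  · intro b hb
    apply THom.ext
    funext n u
    induction n with
    | zero => exact (congrFun (congrFun (congrArg THom.app hb) 0) u).symm
    | succ m ih =>
      have h1 : f.app (m+1) (A.res m (b.app (m+1) u)) = b.app (m+1) u :=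
        congrFun (congrFun (congrArg THom.app hb) (m+1)) u
      have h2 : b.app m u = A.res m (b.app (m+1) u) := b.nat m u
      rw [← h1, ← h2, ih u]
      rfl
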